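/- arXiv:2502.18903 — 10 statements merged into one kernel-verified Lean document; each statement's English description precedes it below -/
import Mathlib

section
/- Let A be an associative ring with pairwise orthogonal idempotents e₁,…,eₙ (n ≥ 3) summing to 1, each full (A eᵢ A = A). Then for each i and each j ≠ i, the diagonal commutators satisfy [eᵢAeᵢ, eᵢAeᵢ] ⊆ [eᵢAeⱼ, eⱼAeᵢ], where brackets denote additive spans of ring commutators. -/
/-- Diagonal commutators `[eᵢAeᵢ, eᵢAeᵢ]` lie in `[eᵢAeⱼ, eⱼAeᵢ]`. -/
theorem stmt_3 (A : Type*) [Ring A] (n : ℕ) (hn : 3 ≤ n) (e : Fin n → A)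
    (hidem : ∀ i, e i * e i = e i)
    (horth : ∀ i j, i ≠ j → e i * e j = 0)
    (hsum : ∑ i, e i = 1)
    (hfull : ∀ i, AddSubgroup.closure {x : A | ∃ a b : A, x = a * e i * b} = ⊤)
    (i j : Fin n) (hij : i ≠ j) :
    AddSubgroup.closure
        {z : A | ∃ a b : A,
          z = (e i * a * e i) * (e i * b * e i) - (e i * b * e i) * (e i * a * e i)} ≤
      AddSubgroup.closure
        {z : A | ∃ a b : A,
          z = (e i * a * e j) * (e j * b * e i) - (e j * b * e i) * (e i * a * e j)} := by
  have hi' : ∀ z : A, e i * (e i * z) = e i * z := fun z => by rw [← mul_assoc, hidem i]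
  have hj' : ∀ z : A, e j * (e j * z) = e j * z := fun z => by rw [← mul_assoc, hidem j]
  set T := AddSubgroup.closure
      {z : A | ∃ a b : A,
        z = (e i * a * e j) * (e j * b * e i) - (e j * b * e i) * (e i * a * e j)} with hT
  rw [AddSubgroup.closure_le]
  rintro z ⟨a, b, rfl⟩
  set x := e i * a * e i with hx
  set y := e i * b * e i with hy
  -- the additive map t ↦ x (eᵢ t eᵢ) y - y x (eᵢ t eᵢ)
  let f : A →+ A := AddMonoidHom.mk'
    (fun t => x * (e i * t * e i) * y - y * (x * (e i * t * e i)))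
    (fun s t => by noncomm_ring)
  have hmem : (1 : A) ∈ AddSubgroup.closure {w : A | ∃ a b : A, w = a * e j * b} := by
    rw [hfull j]; trivial
  have hle : AddSubgroup.closure {w : A | ∃ a b : A, w = a * e j * b} ≤ T.comap f := by
    rw [AddSubgroup.closure_le]
    rintro t ⟨c, d, rfl⟩
    simp only [SetLike.mem_coe, AddSubgroup.mem_comap]
    show x * (e i * (c * e j * d) * e i) * y - y * (x * (e i * (c * e j * d) * e i)) ∈ T
    set A1 := e i * (a * e i * (e i * c)) * e j with hA1
    set B1 := e j * (d * e i * (e i * b)) * e i with hB1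
    set A2 := e i * (b * e i * (e i * (a * e i * (e i * c)))) * e j with hA2
    set B2 := e j * d * e i with hB2
    have h1 : A1 * B1 = x * (e i * (c * e j * d) * e i) * y := by
      rw [hA1, hB1, hx, hy]; simp only [mul_assoc, hi', hj']
    have h2 : A2 * B2 = y * (x * (e i * (c * e j * d) * e i)) := by
      rw [hA2, hB2, hx, hy]; simp only [mul_assoc, hi', hj']
    have h3 : B1 * A1 = B2 * A2 := by
      rw [hA1, hB1, hA2, hB2]; simp only [mul_assoc, hi', hj']
    have key : x * (e i * (c * e j * d) * e i) * y - y * (x * (e i * (c * e j * d) * e i))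
        = (A1 * B1 - B1 * A1) - (A2 * B2 - B2 * A2) := by
      rw [h1, h2, h3]; abel
    rw [key]
    exact sub_mem
      (AddSubgroup.subset_closure ⟨_, _, rfl⟩)
      (AddSubgroup.subset_closure ⟨_, _, rfl⟩)
  have := hle hmem
  simp only [AddSubgroup.mem_comap] at this
  have hf1 : f 1 = x * y - y * x := by
    show x * (e i * 1 * e i) * y - y * (x * (e i * 1 * e i)) = x * y - y * x
    rw [mul_one, hidem i, hx]
    simp only [mul_assoc, hi', hidem i]
  rwa [hf1] at this
end

section
/- Let A be a unital associative ring with pairwise orthogonal full idempotents e₁,…,eₙ (n ≥ 3) summing to 1. Then the additive group [A,A] (generated by all commutators ab - ba) equals the sum over all i ≠ j of [eᵢAeⱼ, eⱼAeᵢ] plus the sum over all i ≠ j of eᵢAeⱼ. -/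
/-- `[A,A]` equals the sum over `i ≠ j` of `[eᵢAeⱼ, eⱼAeᵢ]` plus the sum over
`i ≠ j` of the Peirce components `eᵢAeⱼ`. -/
theorem stmt_4 (A : Type*) [Ring A] (n : ℕ) (hn : 3 ≤ n) (e : Fin n → A)
    (hidem : ∀ i, e i * e i = e i)
    (horth : ∀ i j, i ≠ j → e i * e j = 0)
    (hsum : ∑ i, e i = 1)
    (hfull : ∀ i, AddSubgroup.closure {x : A | ∃ a b : A, x = a * e i * b} = ⊤) :
    AddSubgroup.closure {z : A | ∃ x y : A, z = x * y - y * x} =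
      (⨆ i, ⨆ j, ⨆ _ : i ≠ j, AddSubgroup.closure
        {z : A | ∃ a b : A,
          z = (e i * a * e j) * (e j * b * e i) - (e j * b * e i) * (e i * a * e j)}) ⊔
      (⨆ i, ⨆ j, ⨆ _ : i ≠ j,
        AddSubgroup.closure {z : A | ∃ a : A, z = e i * a * e j}) := by
  set T := (⨆ i, ⨆ j, ⨆ _ : i ≠ j, AddSubgroup.closure
        {z : A | ∃ a b : A,
          z = (e i * a * e j) * (e j * b * e i) - (e j * b * e i) * (e i * a * e j)}) ⊔
      (⨆ i, ⨆ j, ⨆ _ : i ≠ j,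
        AddSubgroup.closure {z : A | ∃ a : A, z = e i * a * e j}) with hTdef
  have hsq : ∀ (j : Fin n) (c : A), e j * (e j * c) = e j * c := by
    intro j c; rw [← mul_assoc, hidem]
  have hz : ∀ (p q : A) (j k : Fin n), j ≠ k → p * e j * (e k * q) = 0 := by
    intro p q j k h
    rw [mul_assoc p, ← mul_assoc (e j), horth j k h, zero_mul, mul_zero]
  have hT1 : ∀ (i j : Fin n), i ≠ j → ∀ a b : A,
      (e i * a * e j) * (e j * b * e i) - (e j * b * e i) * (e i * a * e j) ∈ T := by
    intro i j h a b
    exact AddSubgroup.mem_sup_left (AddSubgroup.mem_iSup_of_mem i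
      (AddSubgroup.mem_iSup_of_mem j (AddSubgroup.mem_iSup_of_mem h
        (AddSubgroup.subset_closure ⟨a, b, rfl⟩))))
  have hT2 : ∀ (i j : Fin n), i ≠ j → ∀ a : A, e i * a * e j ∈ T := by
    intro i j h a
    exact AddSubgroup.mem_sup_right (AddSubgroup.mem_iSup_of_mem i
      (AddSubgroup.mem_iSup_of_mem j (AddSubgroup.mem_iSup_of_mem h
        (AddSubgroup.subset_closure ⟨a, rfl⟩))))
  -- the diagonal case
  have hdiag : ∀ (i : Fin n) (x y : A),
      (e i * x * e i) * (e i * y * e i) - (e i * y * e i) * (e i * x * e i) ∈ T := by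
    intro i x y
    have hnt : Nontrivial (Fin n) := ⟨⟨⟨0, by omega⟩, ⟨1, by omega⟩, by simp⟩⟩
    obtain ⟨j, hj⟩ := exists_ne i
    have hj' : i ≠ j := hj.symm
    set a := e i * x * e i with ha
    set b := e i * y * e i with hb
    have hmem : e i ∈ AddSubgroup.closure {x : A | ∃ p q : A, x = p * e j * q} := by
      rw [hfull j]; trivial
    have key : a * b * (e i * e i * e i) - b * (e i * e i * e i) * a ∈ T := by
      refine AddSubgroup.closure_induction
        (p := fun s _ => a * b * (e i * s * e i) - b * (e i * s * e i) * a ∈ T)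
        ?_ ?_ ?_ ?_ hmem
      · rintro s ⟨p, q, rfl⟩
        show a * b * (e i * (p * e j * q) * e i) - b * (e i * (p * e j * q) * e i) * a ∈ T
        have h3 : e i * (p * e j * q) * e i = (e i * p * e j) * (e j * q * e i) := by
          simp only [mul_assoc, hsq]
        set u := e i * p * e j with hu
        set v := e j * q * e i with hv
        rw [h3]
        have h4 : a * b * (u * v) - b * (u * v) * a =
            ((a * b * u) * v - v * (a * b * u)) - ((b * u) * (v * a) - (v * a) * (b * u)) := by
          noncomm_ring
        rw [h4]
        refine sub_mem ?_ ?_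
        · have e1 : a * b * u = e i * (x * e i * y * e i * p) * e j := by
            rw [ha, hb, hu]; simp only [mul_assoc, hsq]
          rw [e1]
          exact hT1 i j hj' _ _
        · have e1 : b * u = e i * (y * e i * p) * e j := by
            rw [hb, hu]; simp only [mul_assoc, hsq]
          have e2 : v * a = e j * (q * e i * x) * e i := by
            rw [hv, ha]; simp only [mul_assoc, hsq]
          rw [e1, e2]
          exact hT1 i j hj' _ _
      · show a * b * (e i * 0 * e i) - b * (e i * 0 * e i) * a ∈ T
        have : a * b * (e i * 0 * e i) - b * (e i * 0 * e i) * a = 0 := by noncomm_ring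
        rw [this]; exact zero_mem T
      · intro s t _ _ hs ht
        show a * b * (e i * (s + t) * e i) - b * (e i * (s + t) * e i) * a ∈ T
        have h5 : a * b * (e i * (s + t) * e i) - b * (e i * (s + t) * e i) * a =
            (a * b * (e i * s * e i) - b * (e i * s * e i) * a) +
            (a * b * (e i * t * e i) - b * (e i * t * e i) * a) := by noncomm_ring
        rw [h5]; exact add_mem hs ht
      · intro s _ hs
        show a * b * (e i * (-s) * e i) - b * (e i * (-s) * e i) * a ∈ T
        have h5 : a * b * (e i * (-s) * e i) - b * (e i * (-s) * e i) * a =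
            -(a * b * (e i * s * e i) - b * (e i * s * e i) * a) := by noncomm_ring
        rw [h5]; exact neg_mem hs
    have h6 : a * b - b * a = a * b * (e i * e i * e i) - b * (e i * e i * e i) * a := by
      have hei : e i * e i * e i = e i := by rw [hidem, hidem]
      have hbi : b * e i = b := by rw [hb, mul_assoc, hidem]
      rw [hei, mul_assoc a b (e i), hbi]
    rw [h6]; exact key
  refine le_antisymm ?_ ?_
  · -- [A,A] ≤ T
    rw [AddSubgroup.closure_le]
    rintro z ⟨x, y, rfl⟩
    -- Peirce decomposition
    have hx : ∀ w : A, w = ∑ i, ∑ j, e i * w * e j := by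
      intro w
      conv_lhs => rw [← one_mul w, ← mul_one (1 * w), ← hsum]
      rw [Finset.sum_mul, Finset.sum_mul]
      exact Finset.sum_congr rfl fun i _ => by rw [Finset.mul_sum]
    have h1 : ∑ i, ∑ j, ∑ k, ∑ l, (e i * x * e j) * (e k * y * e l) = x * y := by
      have inner : ∀ c : A, ∑ k, ∑ l, c * (e k * y * e l) = c * y := by
        intro c
        conv_rhs => rw [hx y, Finset.mul_sum]
        exact Finset.sum_congr rfl fun k _ => by rw [Finset.mul_sum]
      calc ∑ i, ∑ j, ∑ k, ∑ l, (e i * x * e j) * (e k * y * e l)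
          = ∑ i, ∑ j, (e i * x * e j) * y :=
            Finset.sum_congr rfl fun i _ => Finset.sum_congr rfl fun j _ => inner _
        _ = x * y := by
            conv_rhs => rw [hx x, Finset.sum_mul]
            exact Finset.sum_congr rfl fun i _ => by rw [Finset.sum_mul]
    have h2 : ∑ i, ∑ j, ∑ k, ∑ l, (e k * y * e l) * (e i * x * e j) = y * x := by
      have inner : ∀ c : A, ∑ k, ∑ l, (e k * y * e l) * c = y * c := by
        intro c
        conv_rhs => rw [hx y, Finset.sum_mul]
        exact Finset.sum_congr rfl fun k _ => by rw [Finset.sum_mul]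
      calc ∑ i, ∑ j, ∑ k, ∑ l, (e k * y * e l) * (e i * x * e j)
          = ∑ i, ∑ j, y * (e i * x * e j) :=
            Finset.sum_congr rfl fun i _ => Finset.sum_congr rfl fun j _ => inner _
        _ = y * x := by
            conv_rhs => rw [hx x, Finset.mul_sum]
            exact Finset.sum_congr rfl fun i _ => by rw [Finset.mul_sum]
    have key : x * y - y * x = ∑ i, ∑ j, ∑ k, ∑ l,
        ((e i * x * e j) * (e k * y * e l) - (e k * y * e l) * (e i * x * e j)) := by
      rw [← h1, ← h2]
      simp only [← Finset.sum_sub_distrib]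
    rw [key]
    refine sum_mem fun i _ => sum_mem fun j _ => sum_mem fun k _ => sum_mem fun l _ => ?_
    rcases eq_or_ne j k with rfl | hjk
    · rcases eq_or_ne l i with rfl | hli
      · rcases eq_or_ne l j with rfl | hij
        · exact hdiag l x y
        · exact hT1 l j hij x y
      · have h0 : (e j * y * e l) * (e i * x * e j) = 0 := by
          rw [mul_assoc (e i) x (e j)]
          exact hz _ _ l i hli
        have h0' : (e i * x * e j) * (e j * y * e l) = e i * (x * e j * y) * e l := by
          simp only [mul_assoc, hsq]
        rw [h0, sub_zero, h0']
        exact hT2 i l (Ne.symm hli) _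
    · rcases eq_or_ne l i with rfl | hli
      · have h0 : (e l * x * e j) * (e k * y * e l) = 0 := by
          rw [mul_assoc (e k) y (e l)]
          exact hz _ _ j k hjk
        have h0' : (e k * y * e l) * (e l * x * e j) = e k * (y * e l * x) * e j := by
          simp only [mul_assoc, hsq]
        rw [h0, zero_sub, h0']
        exact neg_mem (hT2 k j (Ne.symm hjk) _)
      · have h0 : (e i * x * e j) * (e k * y * e l) = 0 := by
          rw [mul_assoc (e k) y (e l)]
          exact hz _ _ j k hjk
        have h0' : (e k * y * e l) * (e i * x * e j) = 0 := by
          rw [mul_assoc (e i) x (e j)]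
          exact hz _ _ l i hli
        rw [h0, h0', sub_zero]
        exact zero_mem T
  · -- T ≤ [A,A]
    rw [hTdef]
    set S := {z : A | ∃ x y : A, z = x * y - y * x} with hS
    refine sup_le ?_ ?_
    · refine iSup_le fun i => iSup_le fun j => iSup_le fun h => ?_
      rw [AddSubgroup.closure_le]
      rintro z ⟨a, b, rfl⟩
      exact AddSubgroup.subset_closure ⟨_, _, rfl⟩
    · refine iSup_le fun i => iSup_le fun j => iSup_le fun h => ?_
      rw [AddSubgroup.closure_le]
      rintro z ⟨a, rfl⟩
      refine AddSubgroup.subset_closure ⟨e i, e i * a * e j, ?_⟩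
      rw [← mul_assoc, ← mul_assoc, hidem i, mul_assoc (e i * a), horth j i (Ne.symm h),
        mul_zero, sub_zero]
end

section
/- Let A be a unital associative ring with pairwise orthogonal full idempotents e₁,…,eₙ (n ≥ 3) summing to 1. Then the Lie ring [A,A] is perfect: [[A,A],[A,A]] = [A,A]. -/
private lemma hz_aux {A : Type*} [Ring A] {p q : A} (h : p * q = 0) (z : A) :
    p * (q * z) = 0 := by rw [← mul_assoc, h, zero_mul]

private lemma hi_aux {A : Type*} [Ring A] {p : A} (h : p * p = p) (z : A) :
    p * (p * z) = p * z := by rw [← mul_assoc, h]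

/-- The Lie ring `[A,A]` is perfect: `[[A,A],[A,A]] = [A,A]`. -/
theorem stmt_5 (A : Type*) [Ring A] (n : ℕ) (hn : 3 ≤ n) (e : Fin n → A)
    (hidem : ∀ i, e i * e i = e i)
    (horth : ∀ i j, i ≠ j → e i * e j = 0)
    (hsum : ∑ i, e i = 1)
    (hfull : ∀ i, AddSubgroup.closure {x : A | ∃ a b : A, x = a * e i * b} = ⊤) :
    AddSubgroup.closure
        {z : A | ∃ x ∈ AddSubgroup.closure {w : A | ∃ a b : A, w = a * b - b * a},
          ∃ y ∈ AddSubgroup.closure {w : A | ∃ a b : A, w = a * b - b * a},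
          z = x * y - y * x} =
      AddSubgroup.closure {w : A | ∃ a b : A, w = a * b - b * a} := by
  set S : Set A := {w : A | ∃ a b : A, w = a * b - b * a} with hS
  set L : AddSubgroup A := AddSubgroup.closure S with hLdef
  set T : Set A := {z : A | ∃ x ∈ L, ∃ y ∈ L, z = x * y - y * x} with hT
  set D : AddSubgroup A := AddSubgroup.closure T with hDdef
  have comm_mem_D : ∀ x y : A, x ∈ L → y ∈ L → x * y - y * x ∈ D := by
    intro x y hx hy
    exact AddSubgroup.subset_closure ⟨x, hx, y, hy, rfl⟩
  -- off-diagonal elements belong to L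
  have mem_L : ∀ i j : Fin n, i ≠ j → ∀ x : A, e i * x * e j ∈ L := by
    intro i j hij x
    have key : e i * x * e j = e i * (e i * x * e j) - (e i * x * e j) * e i := by
      simp only [mul_assoc, hi_aux (hidem i), hz_aux (horth j i (Ne.symm hij)),
        horth j i (Ne.symm hij), mul_zero, sub_zero]
    exact key ▸ AddSubgroup.subset_closure ⟨e i, e i * x * e j, key.symm ▸ rfl⟩
  -- off-diagonal elements belong to D
  have off_mem_D : ∀ i j : Fin n, i ≠ j → ∀ x : A, e i * x * e j ∈ D := by
    intro i j hij x
    obtain ⟨m, hm, hmj⟩ : ∃ m ∈ Finset.univ.erase i, m ≠ j := by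
      apply Finset.exists_mem_ne
      rw [Finset.card_erase_of_mem (Finset.mem_univ i), Finset.card_univ, Fintype.card_fin]
      omega
    have hmi : m ≠ i := Finset.ne_of_mem_erase hm
    set f : A →+ A := AddMonoidHom.mk' (fun x => e i * x * e j)
      (fun x y => by rw [mul_add, add_mul]) with hf
    have hle : AddSubgroup.closure {y : A | ∃ a b : A, y = a * e m * b} ≤ D.comap f := by
      rw [AddSubgroup.closure_le]
      rintro _ ⟨a, b, rfl⟩
      have hu : e i * a * e m ∈ L := mem_L i m (Ne.symm hmi) a
      have hv : e m * b * e j ∈ L := mem_L m j hmj b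
      have hcomm := comm_mem_D _ _ hu hv
      have heq : e i * (a * e m * b) * e j
          = (e i * a * e m) * (e m * b * e j) - (e m * b * e j) * (e i * a * e m) := by
        simp only [mul_assoc, hi_aux (hidem m), hz_aux (horth j i (Ne.symm hij)), mul_zero,
          sub_zero]
      show e i * (a * e m * b) * e j ∈ D
      rw [heq]; exact hcomm
    have hx : x ∈ AddSubgroup.closure {y : A | ∃ a b : A, y = a * e m * b} := by
      rw [hfull m]; exact AddSubgroup.mem_top x
    exact hle hx
  -- diagonal commutators belong to D
  have diag_mem_D : ∀ (i : Fin n) (a b : A),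
      (e i * a * e i) * (e i * b * e i) - (e i * b * e i) * (e i * a * e i) ∈ D := by
    intro i a b
    obtain ⟨m, hmi⟩ : ∃ m : Fin n, m ≠ i := by
      have : Nontrivial (Fin n) := Fin.nontrivial_iff_two_le.mpr (by omega)
      exact exists_ne i
    set a' : A := e i * a * e i with ha'
    set f : A →+ A := AddMonoidHom.mk' (fun x => a' * (e i * x * e i) - (e i * x * e i) * a')
      (fun x y => by noncomm_ring) with hf
    have hle : AddSubgroup.closure {y : A | ∃ c d : A, y = c * e m * d} ≤ D.comap f := by
      rw [AddSubgroup.closure_le]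
      rintro _ ⟨c, d, rfl⟩
      show a' * (e i * (c * e m * d) * e i) - (e i * (c * e m * d) * e i) * a' ∈ D
      set u : A := e i * c * e m with hu'
      set v : A := e m * d * e i with hv'
      have huv : e i * (c * e m * d) * e i = u * v := by
        rw [hu', hv']
        simp only [mul_assoc, hi_aux (hidem m)]
      rw [huv]
      have h1 : a' * u = e i * (a * e i * c) * e m := by
        rw [ha', hu']
        simp only [mul_assoc, hi_aux (hidem i)]
      have h2 : v * a' = e m * (d * e i * a) * e i := by
        rw [ha', hv']
        simp only [mul_assoc, hi_aux (hidem i)]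
      have hb1 : (a' * u) * v - v * (a' * u) ∈ D :=
        comm_mem_D _ _ (h1 ▸ mem_L i m (Ne.symm hmi) _) (mem_L m i hmi d)
      have hb2 : (v * a') * u - u * (v * a') ∈ D :=
        comm_mem_D _ _ (h2 ▸ mem_L m i hmi _) (mem_L i m (Ne.symm hmi) c)
      have split : a' * (u * v) - (u * v) * a'
          = ((a' * u) * v - v * (a' * u)) + ((v * a') * u - u * (v * a')) := by
        noncomm_ring
      rw [split]
      exact add_mem hb1 hb2
    have hb : b ∈ AddSubgroup.closure {y : A | ∃ c d : A, y = c * e m * d} := by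
      rw [hfull m]; exact AddSubgroup.mem_top b
    have := hle hb
    exact this
  -- all component commutators belong to D
  have comp : ∀ (a b : A) (i j k l : Fin n),
      (e i * a * e j) * (e k * b * e l) - (e k * b * e l) * (e i * a * e j) ∈ D := by
    intro a b i j k l
    by_cases hjk : j = k
    · subst hjk
      by_cases hil : i = l
      · subst hil
        by_cases hij : i = j
        · subst hij
          exact diag_mem_D i a b
        · exact comm_mem_D _ _ (mem_L i j hij a) (mem_L j i (Ne.symm hij) b)
      · have hY : (e j * b * e l) * (e i * a * e j) = 0 := by
          simp only [mul_assoc, hz_aux (horth l i (Ne.symm hil)), mul_zero]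
        have hX : (e i * a * e j) * (e j * b * e l) = e i * (a * e j * b) * e l := by
          simp only [mul_assoc, hi_aux (hidem j)]
        rw [hY, hX, sub_zero]
        exact off_mem_D i l hil _
    · by_cases hil : i = l
      · subst hil
        have hX : (e i * a * e j) * (e k * b * e i) = 0 := by
          simp only [mul_assoc, hz_aux (horth j k hjk), mul_zero]
        have hY : (e k * b * e i) * (e i * a * e j) = e k * (b * e i * a) * e j := by
          simp only [mul_assoc, hi_aux (hidem i)]
        rw [hX, hY, zero_sub]
        exact neg_mem (off_mem_D k j (fun h => hjk h.symm) _)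
      · have hX : (e i * a * e j) * (e k * b * e l) = 0 := by
          simp only [mul_assoc, hz_aux (horth j k hjk), mul_zero]
        have hY : (e k * b * e l) * (e i * a * e j) = 0 := by
          simp only [mul_assoc, hz_aux (horth l i (Ne.symm hil)), mul_zero]
        rw [hX, hY, sub_zero]
        exact zero_mem D
  -- decomposition of any element
  have hdecomp : ∀ a : A, a = ∑ i, ∑ j, e i * a * e j := by
    intro a
    calc a = (∑ i, e i) * a * (∑ j, e j) := by rw [hsum, one_mul, mul_one]
    _ = ∑ i, ∑ j, e i * a * e j := by
        rw [Finset.sum_mul, Finset.sum_mul]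
        exact Finset.sum_congr rfl fun i _ => by rw [Finset.mul_sum]
  apply le_antisymm
  · rw [hDdef, AddSubgroup.closure_le]
    rintro _ ⟨x, hx, y, hy, rfl⟩
    exact AddSubgroup.subset_closure ⟨x, y, rfl⟩
  · rw [hLdef, AddSubgroup.closure_le]
    rintro _ ⟨a, b, rfl⟩
    show a * b - b * a ∈ D
    have step1 : ∀ x : A, x * b - b * x ∈ D → True := fun _ _ => trivial
    have inner : ∀ x : A, (∀ k l : Fin n, x * (e k * b * e l) - (e k * b * e l) * x ∈ D)
        → x * b - b * x ∈ D := by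
      intro x hx
      have : x * b - b * x = ∑ k, ∑ l, (x * (e k * b * e l) - (e k * b * e l) * x) := by
        conv_lhs => rw [hdecomp b]
        rw [Finset.mul_sum, Finset.sum_mul, ← Finset.sum_sub_distrib]
        exact Finset.sum_congr rfl fun k _ => by
          rw [Finset.mul_sum, Finset.sum_mul, ← Finset.sum_sub_distrib]
      rw [this]
      exact sum_mem fun k _ => sum_mem fun l _ => hx k l
    have : a * b - b * a = ∑ i, ∑ j, ((e i * a * e j) * b - b * (e i * a * e j)) := by
      conv_lhs => rw [hdecomp a]
      rw [Finset.sum_mul, Finset.mul_sum, ← Finset.sum_sub_distrib]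
      exact Finset.sum_congr rfl fun i _ => by
        rw [Finset.sum_mul, Finset.mul_sum, ← Finset.sum_sub_distrib]
    rw [this]
    exact sum_mem fun i _ => sum_mem fun j _ =>
      inner _ fun k l => comp a b i j k l
end

section
/- Let A be a unital associative ring with orthogonal full idempotents e₁, e₂, e₃ summing to 1, and suppose i, j, k are distinct indices in {1,2,3}. If x ∈ eᵢAeⱼ satisfies [x, eⱼAe_k] = 0 (i.e., x·eⱼae_k = eⱼae_k·x for all a ∈ A), then x = 0. -/
/-- If `x ∈ eᵢAeⱼ` commutes with every element of `eⱼAe_k` (for `i,j,k` distinct),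
then `x = 0`. -/
theorem stmt_6 (A : Type*) [Ring A] (e : Fin 3 → A)
    (hidem : ∀ i, e i * e i = e i)
    (horth : ∀ i j, i ≠ j → e i * e j = 0)
    (hsum : ∑ i, e i = 1)
    (hfull : ∀ i, AddSubgroup.closure {x : A | ∃ a b : A, x = a * e i * b} = ⊤)
    (i j k : Fin 3) (hij : i ≠ j) (hjk : j ≠ k) (hik : i ≠ k)
    (x : A) (hx : ∃ a : A, x = e i * a * e j)
    (hcomm : ∀ a : A, x * (e j * a * e k) - (e j * a * e k) * x = 0) :
    x = 0 := by
  obtain ⟨c, hc⟩ := hx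
  have hxej : x * e j = x := by
    rw [hc, mul_assoc, mul_assoc, hidem j, ← mul_assoc]
  have hekx : e k * x = 0 := by
    rw [hc, ← mul_assoc, ← mul_assoc, horth k i (Ne.symm hik), zero_mul, zero_mul]
  have hz : ∀ a b : A, x * (a * e k * b) = 0 := by
    intro a b
    have h1 : x * (e j * a * e k) = 0 := by
      have h2 := hcomm a
      rw [sub_eq_zero] at h2
      rw [h2, mul_assoc, hekx, mul_zero]
    calc x * (a * e k * b) = (x * (e j * a * e k)) * b := by
          nth_rewrite 1 [← hxej]; simp [mul_assoc]
      _ = 0 := by rw [h1, zero_mul]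
  have key : ∀ y ∈ AddSubgroup.closure {y : A | ∃ a b : A, y = a * e k * b},
      x * y = 0 := by
    intro y hy
    induction hy using AddSubgroup.closure_induction with
    | mem z hzz => obtain ⟨a, b, rfl⟩ := hzz; exact hz a b
    | zero => simp
    | add p q hp hq ihp ihq => rw [mul_add, ihp, ihq, add_zero]
    | neg p hp ihp => rw [mul_neg, ihp, neg_zero]
  have h1 := key 1 (by rw [hfull k]; trivial)
  rw [mul_one] at h1
  exact h1
end

section
/- Let A be a unital associative ring with orthogonal full idempotents e₁, e₂, e₃ summing to 1, and i ≠ j in {1,2,3}. Then eᵢAeⱼ = (eᵢAe_k)(e_kAeⱼ) for k the remaining index; in particular every element of eᵢAeⱼ is a sum of commutators [a, b] with a ∈ eᵢAe_k, b ∈ e_kAeⱼ. -/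
/-- `eᵢAeⱼ = (eᵢAe_k)(e_kAeⱼ)`; in particular every element of `eᵢAeⱼ` is a sum
of commutators `[a,b]` with `a ∈ eᵢAe_k`, `b ∈ e_kAeⱼ`. -/
theorem stmt_7 (A : Type*) [Ring A] (e : Fin 3 → A)
    (hidem : ∀ i, e i * e i = e i)
    (horth : ∀ i j, i ≠ j → e i * e j = 0)
    (hsum : ∑ i, e i = 1)
    (hfull : ∀ i, AddSubgroup.closure {x : A | ∃ a b : A, x = a * e i * b} = ⊤)
    (i j k : Fin 3) (hij : i ≠ j) (hjk : j ≠ k) (hik : i ≠ k) :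
    AddSubgroup.closure {z : A | ∃ a : A, z = e i * a * e j} =
      AddSubgroup.closure
        {z : A | ∃ a b : A, z = (e i * a * e k) * (e k * b * e j)} ∧
    AddSubgroup.closure {z : A | ∃ a : A, z = e i * a * e j} =
      AddSubgroup.closure
        {z : A | ∃ a b : A,
          z = (e i * a * e k) * (e k * b * e j) - (e k * b * e j) * (e i * a * e k)} := by
  have hq : ∀ a b : A, (e k * b * e j) * (e i * a * e k) = 0 := by
    intro a b
    have h0 : e j * e i = 0 := horth j i hij.symm
    calc (e k * b * e j) * (e i * a * e k) = e k * b * (e j * e i) * (a * e k) := by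
          noncomm_ring
      _ = 0 := by rw [h0]; simp
  have hset : {z : A | ∃ a b : A,
      z = (e i * a * e k) * (e k * b * e j) - (e k * b * e j) * (e i * a * e k)} =
      {z : A | ∃ a b : A, z = (e i * a * e k) * (e k * b * e j)} := by
    ext z
    constructor
    · rintro ⟨a, b, rfl⟩; exact ⟨a, b, by rw [hq a b, sub_zero]⟩
    · rintro ⟨a, b, rfl⟩; exact ⟨a, b, by rw [hq a b, sub_zero]⟩
  have main : AddSubgroup.closure {z : A | ∃ a : A, z = e i * a * e j} =
      AddSubgroup.closure {z : A | ∃ a b : A, z = (e i * a * e k) * (e k * b * e j)} := by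
    apply le_antisymm
    · rw [AddSubgroup.closure_le]
      rintro z ⟨a, rfl⟩
      have ha : a ∈ AddSubgroup.closure {x : A | ∃ p q : A, x = p * e k * q} := by
        rw [hfull k]; trivial
      induction ha using AddSubgroup.closure_induction with
      | mem x hx =>
        obtain ⟨p, q, rfl⟩ := hx
        apply AddSubgroup.subset_closure
        refine ⟨p, q, ?_⟩
        rw [show (e i * p * e k) * (e k * q * e j)
            = e i * p * (e k * e k) * (q * e j) by noncomm_ring, hidem k]
        noncomm_ring
      | zero => simpa using AddSubgroup.zero_mem _
      | add x y hx hy ihx ihy =>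
        rw [show e i * (x + y) * e j = e i * x * e j + e i * y * e j by noncomm_ring]
        exact AddSubgroup.add_mem _ ihx ihy
      | neg x hx ihx =>
        rw [show e i * (-x) * e j = -(e i * x * e j) by noncomm_ring]
        exact AddSubgroup.neg_mem _ ihx
    · rw [AddSubgroup.closure_le]
      rintro z ⟨a, b, rfl⟩
      apply AddSubgroup.subset_closure
      refine ⟨a * e k * b, ?_⟩
      rw [show (e i * a * e k) * (e k * b * e j)
          = e i * a * (e k * e k) * (b * e j) by noncomm_ring, hidem k]
      noncomm_ring
  exact ⟨main, by rw [hset]; exact main⟩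
end

section
/- Let Γ = ⨁ᵢ₌₁ⁿ ℤωᵢ (n ≥ 3) and Δ = {ωᵢ - ωⱼ : 1 ≤ i ≠ j ≤ n}. If γ ∈ Γ is a sum of elements of Δ and γ ∉ Δ ∪ {0}, then there exists a map g : {ω₁,…,ωₙ} → {-1,1} such that the induced additive map f_g : Γ → ℤ satisfies f_g(γ) ≥ 4. -/
/-- A vector `v` of the `A_{n-1}` root system `Δ = {ωᵢ - ωⱼ : i ≠ j}` in `ℤⁿ`. -/
def IsRootA (n : ℕ) (v : Fin n → ℤ) : Prop :=
  ∃ i j : Fin n, i ≠ j ∧ v = Pi.single i 1 - Pi.single j 1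

-- coordinate-sum of a sum of roots is 0
lemma sum_coords_zero (n : ℕ) (l : List (Fin n → ℤ)) (hl : ∀ v ∈ l, IsRootA n v) :
    ∑ i, l.sum i = 0 := by
  induction l with
  | nil => simp
  | cons v t ih =>
    simp only [List.sum_cons, Pi.add_apply, Finset.sum_add_distrib]
    rw [ih (fun w hw => hl w (List.mem_cons_of_mem _ hw))]
    obtain ⟨i, j, hij, hv⟩ := hl v (List.mem_cons_self)
    subst hv
    simp [Finset.sum_sub_distrib, Finset.sum_pi_single]


/-- If `γ` is a sum of roots of `Δ` and `γ ∉ Δ ∪ {0}`, then there is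
`g : {ω₁,…,ωₙ} → {-1,1}` with `f_g(γ) ≥ 4`. -/
theorem stmt_8 (n : ℕ) (hn : 3 ≤ n) (γ : Fin n → ℤ)
    (hsum : ∃ l : List (Fin n → ℤ), (∀ v ∈ l, IsRootA n v) ∧ γ = l.sum)
    (hnotroot : ¬ IsRootA n γ) (hne : γ ≠ 0) :
    ∃ g : Fin n → ℤ, (∀ i, g i = 1 ∨ g i = -1) ∧ 4 ≤ ∑ i, g i * γ i := by
  obtain ⟨l, hl, hγ⟩ := hsum
  have hzero : ∑ i, γ i = 0 := by rw [hγ]; exact sum_coords_zero n l hl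
  refine ⟨fun i => if 0 ≤ γ i then 1 else -1, fun i => by by_cases h : 0 ≤ γ i <;> simp [h], ?_⟩
  have habs : ∀ i : Fin n, (if 0 ≤ γ i then (1:ℤ) else -1) * γ i = |γ i| := by
    intro i
    by_cases h : 0 ≤ γ i
    · rw [if_pos h, one_mul, abs_of_nonneg h]
    · rw [if_neg h, neg_one_mul, abs_of_neg (lt_of_not_ge h)]
  simp only []
  simp_rw [habs]
  set S := ∑ i, |γ i| with hS
  -- S is even
  have heven : Even S := by
    have : S = ∑ i, (|γ i| + γ i) := by
      rw [Finset.sum_add_distrib, hzero, add_zero]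
    rw [this]
    apply Finset.even_sum
    intro i _
    rcases abs_choice (γ i) with h | h <;> rw [h]
    · exact Even.add_self _
    · simp
  -- S ≥ 1
  have hpos : 1 ≤ S := by
    obtain ⟨k, hk⟩ := Function.ne_iff.mp hne
    calc (1:ℤ) ≤ |γ k| := Int.one_le_abs (by simpa using hk)
      _ ≤ S := Finset.single_le_sum (fun i _ => abs_nonneg (γ i)) (Finset.mem_univ k)
  by_contra hlt
  push_neg at hlt
  have hS2 : S = 2 := by obtain ⟨m, hm⟩ := heven; omega
  -- find positive and negative coordinates
  have hexpos : ∃ i, 0 < γ i := by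
    by_contra h
    push_neg at h
    have : S = -∑ i, γ i := by
      rw [← Finset.sum_neg_distrib]
      exact Finset.sum_congr rfl fun i _ => abs_of_nonpos (h i)
    omega
  have hexneg : ∃ j, γ j < 0 := by
    by_contra h
    push_neg at h
    have : S = ∑ i, γ i := Finset.sum_congr rfl fun i _ => abs_of_nonneg (h i)
    omega
  obtain ⟨i, hi⟩ := hexpos
  obtain ⟨j, hj⟩ := hexneg
  have hij : i ≠ j := by intro h; subst h; omega
  have hsub : |γ i| + |γ j| ≤ S := by
    have := Finset.sum_le_sum_of_subset_of_nonneg (Finset.subset_univ {i, j})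
      (fun k _ _ => abs_nonneg (γ k))
    rwa [Finset.sum_pair hij] at this
  rw [abs_of_pos hi, abs_of_neg hj] at hsub
  have hi1 : γ i = 1 := by omega
  have hj1 : γ j = -1 := by omega
  apply hnotroot
  refine ⟨i, j, hij, ?_⟩
  have hrest : ∀ k ∈ Finset.univ \ {i, j}, |γ k| = 0 := by
    rw [← Finset.sum_eq_zero_iff_of_nonneg (fun k _ => abs_nonneg (γ k))]
    have := Finset.sum_sdiff_eq_sub (f := fun k => |γ k|)
      (Finset.subset_univ ({i, j} : Finset (Fin n)))
    rw [this, Finset.sum_pair hij]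
    have hb : ∑ x : Fin n, (fun k => |γ k|) x = S := rfl
    have e1 : |γ i| = 1 := by rw [hi1]; norm_num
    have e2 : |γ j| = 1 := by rw [hj1]; norm_num
    omega
  funext k
  simp only [Pi.sub_apply]
  rcases eq_or_ne k i with rfl | hki
  · rw [Pi.single_eq_same, Pi.single_eq_of_ne hij]; omega
  rcases eq_or_ne k j with rfl | hkj
  · rw [Pi.single_eq_same, Pi.single_eq_of_ne (Ne.symm hij)]; omega
  · have h0 : |γ k| = 0 := hrest k (by simp [hki, hkj])
    rw [abs_eq_zero] at h0
    rw [Pi.single_eq_of_ne hki, Pi.single_eq_of_ne hkj]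
    omega
end

section
/- Let A be an associative ring with A·A = A. Then there exists a universal annihilator extension ω : U → A: U is an associative ring with U·U = U, ω is a surjective ring homomorphism with ker ω ⊆ Ann(U), and for every annihilator extension ψ : A' → A there exists a ring homomorphism χ : U → A' with ψ ∘ χ = ω. -/
universe u
open TensorProduct

variable (A : Type u) [NonUnitalRing A]

noncomputable def annMulMap : A ⊗[ℤ] A →ₗ[ℤ] A := TensorProduct.lift (LinearMap.mul ℤ A)

@[simp] lemma annMulMap_tmul (a b : A) : annMulMap A (a ⊗ₜ b) = a * b := rfl

def annRel : Submodule ℤ (A ⊗[ℤ] A) :=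
  Submodule.span ℤ {x | ∃ a b c : A, x = (a * b) ⊗ₜ[ℤ] c - a ⊗ₜ[ℤ] (b * c)}

abbrev AnnU : Type u := (A ⊗[ℤ] A) ⧸ annRel A

noncomputable instance : AddCommGroup (AnnU A) := Submodule.Quotient.addCommGroup _

noncomputable instance : Module ℤ (AnnU A) := Submodule.Quotient.module _

lemma annRel_le_ker : annRel A ≤ LinearMap.ker (annMulMap A) := by
  rw [annRel, Submodule.span_le]
  rintro x ⟨a, b, c, rfl⟩
  simp [LinearMap.mem_ker, mul_assoc]

noncomputable def annOmega : AnnU A →ₗ[ℤ] A :=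
  Submodule.liftQ (annRel A) (annMulMap A) (annRel_le_ker A)

local notation "mkU" => Submodule.Quotient.mk (p := annRel A)

@[simp] lemma annOmega_mk (t : A ⊗[ℤ] A) : annOmega A (mkU t) = annMulMap A t := rfl

noncomputable instance : Mul (AnnU A) :=
  ⟨fun u v => mkU (annOmega A u ⊗ₜ[ℤ] annOmega A v)⟩

lemma annMul_def (u v : AnnU A) : u * v = mkU (annOmega A u ⊗ₜ[ℤ] annOmega A v) := rfl

@[simp] lemma annOmega_mul (u v : AnnU A) :
    annOmega A (u * v) = annOmega A u * annOmega A v := by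
  rw [annMul_def]; simp

noncomputable instance : NonUnitalRing (AnnU A) :=
  { (inferInstance : AddCommGroup (AnnU A)), (inferInstance : Mul (AnnU A)) with
    left_distrib := by
      intro u v w
      simp only [annMul_def, map_add, TensorProduct.tmul_add]
      exact congrArg _ rfl |>.trans (map_add (Submodule.mkQ (annRel A)) _ _)
    right_distrib := by
      intro u v w
      simp only [annMul_def, map_add, TensorProduct.add_tmul]
      exact congrArg _ rfl |>.trans (map_add (Submodule.mkQ (annRel A)) _ _)
    zero_mul := by intro u; simp [annMul_def]
    mul_zero := by intro u; simp [annMul_def]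
    mul_assoc := by
      intro u v w
      simp only [annMul_def, annOmega_mk, annMulMap_tmul]
      rw [Submodule.Quotient.eq]
      exact Submodule.subset_span ⟨_, _, _, rfl⟩ }

noncomputable def annOmegaHom : AnnU A →ₙ+* A :=
  { toFun := annOmega A
    map_mul' := annOmega_mul A
    map_zero' := map_zero _
    map_add' := map_add _ }

@[simp] lemma annOmegaHom_apply (u : AnnU A) : annOmegaHom A u = annOmega A u := rfl

lemma annOmega_surj (hA : ∀ a : A, a ∈ AddSubgroup.closure {x : A | ∃ b c : A, x = b * c}) :
    Function.Surjective (annOmegaHom A) := by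
  intro a
  refine AddSubgroup.closure_induction ?_ ?_ ?_ ?_ (hA a)
  · rintro x ⟨b, c, rfl⟩
    exact ⟨Submodule.Quotient.mk (p := annRel A) (b ⊗ₜ c), by simp⟩
  · exact ⟨0, by simp⟩
  · rintro x y - - ⟨u, rfl⟩ ⟨v, rfl⟩
    exact ⟨u + v, by simp⟩
  · rintro x - ⟨u, rfl⟩
    exact ⟨-u, by simp⟩

/-- Existence of the universal annihilator extension of a ring `A` with `A·A = A`. -/
theorem stmt_11 (A : Type u) [NonUnitalRing A]
    (hA : ∀ a : A, a ∈ AddSubgroup.closure {x : A | ∃ b c : A, x = b * c}) :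
    ∃ (U : Type u) (_ : NonUnitalRing U) (ω : U →ₙ+* A),
      Function.Surjective ω ∧
      (∀ u : U, u ∈ AddSubgroup.closure {x : U | ∃ b c : U, x = b * c}) ∧
      (∀ u : U, ω u = 0 → ∀ v : U, u * v = 0 ∧ v * u = 0) ∧
      (∀ (A' : Type u) (_ : NonUnitalRing A') (ψ : A' →ₙ+* A),
        Function.Surjective ψ →
        (∀ a : A', a ∈ AddSubgroup.closure {x : A' | ∃ b c : A', x = b * c}) →
        (∀ a : A', ψ a = 0 → ∀ b : A', a * b = 0 ∧ b * a = 0) →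
        ∃ χ : U →ₙ+* A', ∀ x : U, ψ (χ x) = ω x) := by
  refine ⟨AnnU A, inferInstance, annOmegaHom A, annOmega_surj A hA, ?_, ?_, ?_⟩
  · -- U·U = U : every pure tensor is a product
    have hsurj := annOmega_surj A hA
    intro u
    obtain ⟨t, rfl⟩ := Submodule.Quotient.mk_surjective (annRel A) u
    induction t with
    | zero => simpa using (AddSubgroup.closure _).zero_mem
    | tmul a b =>
      obtain ⟨x, hx⟩ := hsurj a
      obtain ⟨y, hy⟩ := hsurj b
      refine AddSubgroup.subset_closure ⟨x, y, ?_⟩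
      rw [annMul_def]
      simp only [annOmegaHom_apply] at hx hy
      rw [show annOmega A x = a from hx, show annOmega A y = b from hy]
    | add s t hs ht =>
      simpa using (AddSubgroup.closure _).add_mem hs ht
  · -- kernel annihilates
    intro u hu v
    have hu' : annOmega A u = 0 := hu
    constructor <;> rw [annMul_def] <;> rw [hu'] <;> simp
  · -- universality
    intro A' instA' ψ hψ hA' hann
    classical
    set s : A → A' := Function.surjInv hψ with hs
    have hψs : ∀ a : A, ψ (s a) = a := fun a => Function.surjInv_eq hψ a
    -- key lemma: elements with the same image multiply the same way
    have key : ∀ x y : A', ψ x = ψ y → ∀ c : A', x * c = y * c ∧ c * x = c * y := by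
      intro x y h c
      have h0 : ψ (x - y) = 0 := by rw [map_sub, h, sub_self]
      obtain ⟨h1, h2⟩ := hann _ h0 c
      rw [sub_mul] at h1; rw [mul_sub] at h2
      exact ⟨sub_eq_zero.mp h1, sub_eq_zero.mp h2⟩
    -- bilinear map
    have hadd_l : ∀ a₁ a₂ b : A, s (a₁ + a₂) * s b = s a₁ * s b + s a₂ * s b := by
      intro a₁ a₂ b
      have : ψ (s (a₁ + a₂)) = ψ (s a₁ + s a₂) := by simp [hψs]
      rw [(key _ _ this (s b)).1, add_mul]
    have hadd_r : ∀ a b₁ b₂ : A, s a * s (b₁ + b₂) = s a * s b₁ + s a * s b₂ := by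
      intro a b₁ b₂
      have : ψ (s (b₁ + b₂)) = ψ (s b₁ + s b₂) := by simp [hψs]
      rw [(key _ _ this (s a)).2, mul_add]
    have hsmul_l : ∀ (n : ℤ) (a b : A), s (n • a) * s b = n • (s a * s b) := by
      intro n a b
      have : ψ (s (n • a)) = ψ (n • s a) := by simp [hψs]
      rw [(key _ _ this (s b)).1, smul_mul_assoc]
    have hsmul_r : ∀ (n : ℤ) (a b : A), s a * s (n • b) = n • (s a * s b) := by
      intro n a b
      have : ψ (s (n • b)) = ψ (n • s b) := by simp [hψs]
      rw [(key _ _ this (s a)).2, mul_smul_comm]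
    let f : A →ₗ[ℤ] A →ₗ[ℤ] A' :=
      LinearMap.mk₂ ℤ (fun a b => s a * s b)
        (fun a₁ a₂ b => hadd_l a₁ a₂ b) (fun n a b => hsmul_l n a b)
        (fun a b₁ b₂ => hadd_r a b₁ b₂) (fun n a b => hsmul_r n a b)
    let χ₀ : A ⊗[ℤ] A →ₗ[ℤ] A' := TensorProduct.lift f
    have hχ₀ : ∀ a b : A, χ₀ (a ⊗ₜ b) = s a * s b := fun a b => rfl
    have hker : annRel A ≤ LinearMap.ker χ₀ := by
      rw [annRel, Submodule.span_le]
      rintro x ⟨a, b, c, rfl⟩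
      simp only [SetLike.mem_coe, LinearMap.mem_ker, map_sub, hχ₀]
      have e1 : s (a * b) * s c = (s a * s b) * s c :=
        (key _ _ (by rw [hψs, map_mul, hψs, hψs]) (s c)).1
      have e2 : s a * s (b * c) = s a * (s b * s c) :=
        (key _ _ (by rw [hψs, map_mul, hψs, hψs]) (s a)).2
      rw [e1, e2, mul_assoc, sub_self]
    let χ₁ : AnnU A →ₗ[ℤ] A' := Submodule.liftQ (annRel A) χ₀ hker
    have hχ₁mk : ∀ t : A ⊗[ℤ] A,
        χ₁ (Submodule.Quotient.mk (p := annRel A) t) = χ₀ t := fun t =>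
      rfl
    -- ψ ∘ χ₁ = ω
    have hcomm : ∀ u : AnnU A, ψ (χ₁ u) = annOmega A u := by
      intro u
      obtain ⟨t, rfl⟩ := Submodule.Quotient.mk_surjective (annRel A) u
      rw [hχ₁mk, annOmega_mk]
      induction t with
      | zero => simp
      | tmul a b => rw [hχ₀, map_mul, hψs, hψs, annMulMap_tmul]
      | add x y hx hy => rw [map_add, map_add, map_add, hx, hy]
    -- multiplicativity
    have hmul : ∀ u v : AnnU A, χ₁ (u * v) = χ₁ u * χ₁ v := by
      intro u v
      rw [annMul_def, hχ₁mk, hχ₀]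
      have e1 : s (annOmega A u) * s (annOmega A v) = χ₁ u * s (annOmega A v) :=
        (key _ _ (by rw [hψs, hcomm]) _).1
      have e2 : χ₁ u * s (annOmega A v) = χ₁ u * χ₁ v :=
        (key _ _ (by rw [hψs, hcomm]) _).2
      rw [e1, e2]
    refine ⟨{ toFun := χ₁, map_mul' := hmul, map_zero' := map_zero _,
              map_add' := map_add _ }, ?_⟩
    intro x
    exact hcomm x
end

section
/- Let B be the unital F-algebra (char F ≠ 2) generated by elements e₁, e₂, … and z subject to eᵢeⱼ + eⱼeᵢ = 0, zeᵢ = eᵢz, z² = 0, and zeᵢeⱼe_k = 0 for all i,j,k. The linear map d : B → B defined on the basis {1; eᵢ₁⋯eᵢₖ (i₁<⋯<iₖ); z; zeᵢ; zeᵢeⱼ (i<j)} by d(eᵢ) = zeᵢ and d = 0 on all other basis elements is a Jordan derivation of B but not a derivation of B. -/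
/-- In the unital `F`-algebra (`char F ≠ 2`) with anticommuting generators `eᵢ` and a
central element `z` with `z² = 0`, `z·eᵢeⱼe_k = 0`, with the indicated basis, the
linear map `d` sending `eᵢ ↦ z·eᵢ` and all other basis elements to `0` is a Jordan
derivation but not a derivation. -/
theorem stmt_12 (F : Type*) [Field F] (hF : (2 : F) ≠ 0)
    (B : Type*) [Ring B] [Algebra F B]
    (e : ℕ → B) (z : B)
    (rel1 : ∀ i j, e i * e j + e j * e i = 0)
    (rel2 : ∀ i, z * e i = e i * z)
    (rel3 : z ^ 2 = 0)
    (rel4 : ∀ i j k, z * (e i * e j * e k) = 0)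
    -- the described family is a basis of `B`:
    (hindep : LinearIndependent F
      (Sum.elim
        (fun l : {l : List ℕ // l.Chain' (· < ·)} => ((l : List ℕ).map e).prod)
        (fun l : {l : List ℕ // l.Chain' (· < ·) ∧ l.length ≤ 2} =>
          z * ((l : List ℕ).map e).prod)))
    (hspan : Submodule.span F (Set.range
      (Sum.elim
        (fun l : {l : List ℕ // l.Chain' (· < ·)} => ((l : List ℕ).map e).prod)
        (fun l : {l : List ℕ // l.Chain' (· < ·) ∧ l.length ≤ 2} =>
          z * ((l : List ℕ).map e).prod))) = ⊤)
    (d : B →ₗ[F] B)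
    (hd1 : d 1 = 0) (hdz : d z = 0)
    (hde : ∀ i, d (e i) = z * e i)
    (hdprod : ∀ l : List ℕ, l.Chain' (· < ·) → 2 ≤ l.length → d (l.map e).prod = 0)
    (hdze : ∀ i, d (z * e i) = 0)
    (hdzee : ∀ i j, i < j → d (z * (e i * e j)) = 0) :
    (∀ a b : B, d (a * b + b * a) = d a * b + b * d a + a * d b + d b * a) ∧
    ¬ (∀ a b : B, d (a * b) = d a * b + a * d b) := by
  -- basic consequences of the relations
  have e2 : ∀ i, e i * e i = 0 := by
    intro i
    have h2 : (2 : F) • (e i * e i) = 0 := by rw [two_smul]; exact rel1 i i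
    rcases smul_eq_zero.mp h2 with h | h
    · exact absurd h hF
    · exact h
  have zz : z * z = 0 := by rw [← sq]; exact rel3
  have zc : ∀ l : List ℕ, z * (l.map e).prod = (l.map e).prod * z := by
    intro l
    induction l with
    | nil => simp
    | cons i t ih =>
      simp only [List.map_cons, List.prod_cons]
      rw [← mul_assoc, rel2, mul_assoc, ih, ← mul_assoc]
  have zxz : ∀ a b : B, z * a = a * z → (z * a) * (z * b) = 0 := by
    intro a b ha
    rw [mul_assoc, ← mul_assoc a z b, ← ha, mul_assoc z a b, ← mul_assoc z z (a * b),
      zz, zero_mul]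
  have z3 : ∀ l : List ℕ, 3 ≤ l.length → z * (l.map e).prod = 0 := by
    intro l hl
    match l, hl with
    | i :: j :: k :: r, _ =>
      simp only [List.map_cons, List.prod_cons]
      rw [show e i * (e j * (e k * ((r.map e).prod))) =
          (e i * e j * e k) * (r.map e).prod by noncomm_ring,
        ← mul_assoc, rel4, zero_mul]
  -- insertion into a sorted product
  have ins : ∀ (m : List ℕ), m.Chain' (· < ·) → ∀ i : ℕ,
      e i * (m.map e).prod = 0 ∨
      ∃ (c : F) (m' : List ℕ), m'.Chain' (· < ·) ∧ m'.length = m.length + 1 ∧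
        (∀ x ∈ m', x = i ∨ x ∈ m) ∧ e i * (m.map e).prod = c • (m'.map e).prod := by
    intro m
    induction m with
    | nil =>
      intro _ i
      right
      exact ⟨1, [i], List.isChain_singleton i, rfl, by simp, by simp⟩
    | cons j t ih =>
      intro hc i
      rw [List.Chain', List.isChain_iff_pairwise] at hc
      rcases List.pairwise_cons.mp hc with ⟨hjt, hpt⟩
      have hct : t.Chain' (· < ·) := List.isChain_iff_pairwise.mpr hpt
      rcases lt_trichotomy i j with hij | hij | hij
      · -- i < j : just prepend
        right
        refine ⟨1, i :: j :: t, ?_, rfl, ?_, by simp⟩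
        · rw [List.Chain', List.isChain_iff_pairwise, List.pairwise_cons]
          refine ⟨?_, hc⟩
          intro x hx
          rcases List.mem_cons.mp hx with rfl | hx
          · exact hij
          · exact lt_trans hij (hjt x hx)
        · intro x hx
          rcases List.mem_cons.mp hx with rfl | hx
          · exact Or.inl rfl
          · exact Or.inr hx
      · -- i = j : square kills
        left
        subst hij
        simp only [List.map_cons, List.prod_cons]
        rw [← mul_assoc, e2, zero_mul]
      · -- i > j : swap with sign
        have hswap : e i * e j = -(e j * e i) := eq_neg_of_add_eq_zero_left (rel1 i j)
        rcases ih hct i with h0 | ⟨c, m', hm'c, hlen, hmem, heq⟩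
        · left
          simp only [List.map_cons, List.prod_cons]
          rw [← mul_assoc, hswap, neg_mul, mul_assoc, h0, mul_zero, neg_zero]
        · right
          refine ⟨-c, j :: m', ?_, by simp [hlen], ?_, ?_⟩
          · rw [List.Chain', List.isChain_iff_pairwise, List.pairwise_cons]
            refine ⟨?_, List.isChain_iff_pairwise.mp hm'c⟩
            intro x hx
            rcases hmem x hx with rfl | hx
            · exact hij
            · exact hjt x hx
          · intro x hx
            rcases List.mem_cons.mp hx with rfl | hx
            · exact Or.inr List.mem_cons_self
            · rcases hmem x hx with rfl | hx'
              · exact Or.inl rfl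
              · exact Or.inr (List.mem_cons_of_mem _ hx')
          · simp only [List.map_cons, List.prod_cons]
            rw [← mul_assoc, hswap, neg_mul, mul_assoc, heq, mul_smul_comm, neg_smul]
  -- sorting an arbitrary product
  have sortl : ∀ l : List ℕ, (l.map e).prod = 0 ∨
      ∃ (c : F) (m : List ℕ), m.Chain' (· < ·) ∧ m.length = l.length ∧
        (l.map e).prod = c • (m.map e).prod := by
    intro l
    induction l with
    | nil => exact Or.inr ⟨1, [], List.isChain_nil, rfl, by simp⟩
    | cons i t ih =>
      rcases ih with h0 | ⟨c, m, hc, hlen, heq⟩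
      · left; simp only [List.map_cons, List.prod_cons, h0, mul_zero]
      · rcases ins m hc i with h0 | ⟨c2, m2, hc2, hlen2, _, heq2⟩
        · left
          simp only [List.map_cons, List.prod_cons, heq, mul_smul_comm, h0, smul_zero]
        · right
          refine ⟨c * c2, m2, hc2, by simp [hlen2, hlen], ?_⟩
          simp only [List.map_cons, List.prod_cons, heq, mul_smul_comm, heq2, smul_smul]
  -- d kills any product of at least two generators
  have key1 : ∀ l : List ℕ, 2 ≤ l.length → d (l.map e).prod = 0 := by
    intro l hl
    rcases sortl l with h0 | ⟨c, m, hc, hlen, heq⟩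
    · rw [h0, map_zero]
    · rw [heq, map_smul, hdprod m hc (by rw [hlen]; exact hl), smul_zero]
  -- d kills z times any pair of generators
  have dz2 : ∀ i j : ℕ, d (z * (e i * e j)) = 0 := by
    intro i j
    rcases lt_trichotomy i j with h | h | h
    · exact hdzee i j h
    · subst h; rw [e2, mul_zero, map_zero]
    · have hswap : e i * e j = -(e j * e i) := eq_neg_of_add_eq_zero_left (rel1 i j)
      rw [hswap, mul_neg, map_neg, hdzee j i h, neg_zero]
  -- d kills z times any product of generators
  have dzl : ∀ l : List ℕ, d (z * (l.map e).prod) = 0 := by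
    intro l
    match l with
    | [] => simpa using hdz
    | [i] => simpa using hdze i
    | [i, j] => simpa using dz2 i j
    | i :: j :: k :: r =>
      rw [z3 _ (by simp only [List.length_append, List.length_cons, List.length_nil]; omega), map_zero]
  have prodmul : ∀ L M : List ℕ, (L.map e).prod * (M.map e).prod = ((L ++ M).map e).prod := by
    intro L M
    rw [List.map_append, List.prod_append]
  -- the Jordan-derivation predicate
  set P : B → B → Prop :=
    fun a b => d (a * b + b * a) = d a * b + b * d a + a * d b + d b * a with hP
  have Psymm : ∀ a b : B, P a b → P b a := by
    intro a b h
    show d (b * a + a * b) = d b * a + a * d b + b * d a + d a * b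
    rw [add_comm (b * a) (a * b), h]
    abel
  have P1 : ∀ b : B, P 1 b := by
    intro b
    show d (1 * b + b * 1) = d 1 * b + b * d 1 + 1 * d b + d b * 1
    rw [hd1, one_mul, mul_one, one_mul, mul_one, zero_mul, mul_zero, map_add]
    abel
  -- case: two generator-products
  have caseAA : ∀ L M : List ℕ, L.Chain' (· < ·) → M.Chain' (· < ·) →
      P ((L.map e).prod) ((M.map e).prod) := by
    intro L M hL hM
    match L, M with
    | [], M => simpa using P1 _
    | L, [] =>
      apply Psymm
      simpa using P1 _
    | [i], [j] =>
      show d _ = _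
      simp only [List.map_cons, List.map_nil, List.prod_cons, List.prod_nil, mul_one]
      rw [hde, hde, rel1, map_zero]
      have h1 : e j * (z * e i) = z * (e j * e i) := by
        rw [← mul_assoc, ← rel2, mul_assoc]
      have h2 : e i * (z * e j) = z * (e i * e j) := by
        rw [← mul_assoc, ← rel2, mul_assoc]
      rw [h1, h2, mul_assoc z (e i) (e j), mul_assoc z (e j) (e i)]
      have : z * (e i * e j) + z * (e j * e i) = 0 := by
        rw [← mul_add, rel1, mul_zero]
      calc (0 : B) = (z * (e i * e j) + z * (e j * e i)) +
          (z * (e i * e j) + z * (e j * e i)) := by rw [this]; abel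
        _ = z * (e i * e j) + z * (e j * e i) + z * (e i * e j) + z * (e j * e i) := by abel
    | [i], j :: k :: t =>
      show d _ = _
      have hdM : d ((((j :: k :: t)).map e).prod) = 0 := hdprod _ hM (by simp)
      have hdL : d ((([i]).map e).prod) = z * e i := by simpa using hde i
      rw [hdM, hdL, mul_zero, zero_mul, add_zero, add_zero]
      have hM3 : z * ((([i] : List ℕ) ++ (j :: k :: t)).map e).prod = 0 := z3 _ (by simp only [List.length_append, List.length_cons, List.length_nil]; omega)
      have hM3' : z * (((j :: k :: t) ++ [i]).map e).prod = 0 := z3 _ (by simp only [List.length_append, List.length_cons, List.length_nil]; omega)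
      have e1 : (([i] : List ℕ).map e).prod = e i := by simp
      have hA : (([i] : List ℕ).map e).prod * (((j :: k :: t)).map e).prod
          = (((([i] : List ℕ) ++ (j :: k :: t))).map e).prod := prodmul _ _
      have hB : (((j :: k :: t)).map e).prod * (([i] : List ℕ).map e).prod
          = ((((j :: k :: t) ++ [i])).map e).prod := prodmul _ _
      -- LHS
      have lhs0 : d ((([i] : List ℕ).map e).prod * (((j :: k :: t)).map e).prod
          + (((j :: k :: t)).map e).prod * (([i] : List ℕ).map e).prod) = 0 := by
        rw [hA, hB, map_add, key1 _ (by simp only [List.length_append, List.length_cons, List.length_nil]; omega), key1 _ (by simp only [List.length_append, List.length_cons, List.length_nil]; omega), add_zero]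
      rw [lhs0]
      -- RHS: z * e i * prod + prod * (z * e i) = 0
      rw [e1] at hA hB
      have r1 : z * e i * (((j :: k :: t)).map e).prod = 0 := by
        rw [mul_assoc, hA]
        exact hM3
      have r2 : (((j :: k :: t)).map e).prod * (z * e i) = 0 := by
        rw [← mul_assoc, ← zc, mul_assoc, hB]
        exact hM3'
      rw [r1, r2, add_zero]
    | i :: j :: t, [k] =>
      apply Psymm
      -- reuse the previous case via the generic statement? prove directly symmetric
      show d _ = _
      have hM' : (i :: j :: t).Chain' (· < ·) := hL
      have hdM : d ((((i :: j :: t)).map e).prod) = 0 := hdprod _ hM' (by simp)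
      have hdL : d ((([k]).map e).prod) = z * e k := by simpa using hde k
      rw [hdM, hdL, mul_zero, zero_mul, add_zero, add_zero]
      have e1 : (([k] : List ℕ).map e).prod = e k := by simp
      have hA : (([k] : List ℕ).map e).prod * (((i :: j :: t)).map e).prod
          = (((([k] : List ℕ) ++ (i :: j :: t))).map e).prod := prodmul _ _
      have hB : (((i :: j :: t)).map e).prod * (([k] : List ℕ).map e).prod
          = ((((i :: j :: t) ++ [k])).map e).prod := prodmul _ _
      have lhs0 : d ((([k] : List ℕ).map e).prod * (((i :: j :: t)).map e).prod
          + (((i :: j :: t)).map e).prod * (([k] : List ℕ).map e).prod) = 0 := by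
        rw [hA, hB, map_add, key1 _ (by simp only [List.length_append, List.length_cons, List.length_nil]; omega), key1 _ (by simp only [List.length_append, List.length_cons, List.length_nil]; omega), add_zero]
      rw [lhs0]
      rw [e1] at hA hB
      have r1 : z * e k * (((i :: j :: t)).map e).prod = 0 := by
        rw [mul_assoc, hA]
        exact z3 _ (by simp only [List.length_append, List.length_cons, List.length_nil]; omega)
      have r2 : (((i :: j :: t)).map e).prod * (z * e k) = 0 := by
        rw [← mul_assoc, ← zc, mul_assoc, hB]
        exact z3 _ (by simp only [List.length_append, List.length_cons, List.length_nil]; omega)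
      rw [r1, r2, add_zero]
    | i :: j :: t, k :: l :: s =>
      show d _ = _
      have hdL : d ((((i :: j :: t)).map e).prod) = 0 := hdprod _ hL (by simp)
      have hdM : d ((((k :: l :: s)).map e).prod) = 0 := hdprod _ hM (by simp)
      rw [hdL, hdM, mul_zero, zero_mul, mul_zero, zero_mul, add_zero, add_zero, add_zero]
      rw [prodmul, prodmul, map_add, key1 _ (by simp only [List.length_append, List.length_cons, List.length_nil]; omega), key1 _ (by simp only [List.length_append, List.length_cons, List.length_nil]; omega), add_zero]
  -- case: generator-product against z-element
  have caseAB : ∀ L M : List ℕ, L.Chain' (· < ·) →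
      P ((L.map e).prod) (z * (M.map e).prod) := by
    intro L M hL
    match L with
    | [] => simpa using P1 _
    | [i] =>
      show d _ = _
      have hdL : d ((([i]).map e).prod) = z * e i := by simpa using hde i
      have e1 : (([i] : List ℕ).map e).prod = e i := by simp
      rw [hdL, dzl M, mul_zero, zero_mul, add_zero, add_zero, e1]
      -- LHS : e i * (z * pM) + (z * pM) * e i = z * (e i * pM) + z * (pM * e i)
      have c1 : e i * (z * (M.map e).prod) = z * (e i * (M.map e).prod) := by
        rw [← mul_assoc, ← rel2, mul_assoc]
      have c2 : (z * (M.map e).prod) * e i = z * ((M.map e).prod * e i) := by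
        rw [mul_assoc]
      have p1 : e i * (M.map e).prod = ((([i] : List ℕ) ++ M).map e).prod := by
        rw [← prodmul, e1]
      have p2 : (M.map e).prod * e i = ((M ++ [i]).map e).prod := by
        rw [← prodmul, e1]
      rw [c1, c2, p1, p2, map_add, dzl, dzl, add_zero]
      -- RHS : z * e i * (z * pM) + (z * pM) * (z * e i) = 0
      have r1 : z * e i * (z * (M.map e).prod) = 0 := zxz (e i) _ (rel2 i)
      have r2 : (z * (M.map e).prod) * (z * e i) = 0 := zxz _ (e i) (zc M)
      rw [r1, r2, add_zero]
    | i :: j :: t =>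
      show d _ = _
      have hdL : d ((((i :: j :: t)).map e).prod) = 0 := hdprod _ hL (by simp)
      rw [hdL, dzl M, mul_zero, zero_mul, mul_zero, zero_mul, add_zero, add_zero, add_zero]
      set pL := (((i :: j :: t)).map e).prod with hpL
      have c1 : pL * (z * (M.map e).prod) = z * (pL * (M.map e).prod) := by
        rw [← mul_assoc, ← zc, mul_assoc]
      have c2 : (z * (M.map e).prod) * pL = z * ((M.map e).prod * pL) := by
        rw [mul_assoc]
      rw [c1, c2, hpL, prodmul, prodmul, map_add, dzl, dzl, add_zero]
  -- case: two z-elements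
  have caseBB : ∀ L M : List ℕ, P (z * (L.map e).prod) (z * (M.map e).prod) := by
    intro L M
    show d _ = _
    rw [zxz _ _ (zc L), zxz _ _ (zc M), add_zero, map_zero, dzl L, dzl M]
    rw [zero_mul, mul_zero, mul_zero, zero_mul, add_zero, add_zero, add_zero]
  -- assemble: P holds on all pairs of basis vectors
  set v := (Sum.elim
      (fun l : {l : List ℕ // l.Chain' (· < ·)} => ((l : List ℕ).map e).prod)
      (fun l : {l : List ℕ // l.Chain' (· < ·) ∧ l.length ≤ 2} =>
        z * ((l : List ℕ).map e).prod)) with hv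
  have hbasisP : ∀ s t, P (v s) (v t) := by
    intro s t
    match s, t with
    | Sum.inl L, Sum.inl M => exact caseAA L M L.2 M.2
    | Sum.inl L, Sum.inr M => exact caseAB (L : List ℕ) (M : List ℕ) L.2
    | Sum.inr L, Sum.inl M => exact Psymm _ _ (caseAB (M : List ℕ) (L : List ℕ) M.2)
    | Sum.inr L, Sum.inr M => exact caseBB (L : List ℕ) (M : List ℕ)
  -- the Jordan defect as a bilinear map
  have main : ∀ a b : B, d (a * b + b * a) = d a * b + b * d a + a * d b + d b * a := by
    have Jdef : ∃ J : B →ₗ[F] B →ₗ[F] B, ∀ a b : B,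
        J a b = d (a * b + b * a) - (d a * b + b * d a + a * d b + d b * a) := by
      refine ⟨LinearMap.mk₂ F
        (fun a b => d (a * b + b * a) - (d a * b + b * d a + a * d b + d b * a))
        ?_ ?_ ?_ ?_, fun a b => rfl⟩
      · intro m n b
        simp only [add_mul, mul_add, map_add]
        abel
      · intro c m b
        simp only [smul_mul_assoc, mul_smul_comm, ← smul_add, map_smul, ← smul_sub]
      · intro m n b
        simp only [add_mul, mul_add, map_add]
        abel
      · intro c m b
        simp only [smul_mul_assoc, mul_smul_comm, ← smul_add, map_smul, ← smul_sub]
    obtain ⟨J, hJ⟩ := Jdef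
    have hJ0 : J = 0 := by
      apply LinearMap.ext_on_range hspan
      intro s
      apply LinearMap.ext_on_range hspan
      intro t
      have := hbasisP s t
      rw [hJ]
      rw [hP] at this
      simp only [this, sub_self, LinearMap.zero_apply]
    intro a b
    have h0 : J a b = 0 := by rw [hJ0]; rfl
    rw [hJ] at h0
    exact sub_eq_zero.mp h0
  refine ⟨main, ?_⟩
  -- not a derivation
  intro hder
  have h01 := hder (e 0) (e 1)
  have hd01 : d (e 0 * e 1) = 0 := by
    have h := hdprod [0, 1] (List.isChain_pair.mpr (by norm_num)) (by simp)
    simpa using h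
  rw [hd01, hde, hde] at h01
  have hmove : e 0 * (z * e 1) = z * (e 0 * e 1) := by
    rw [← mul_assoc, ← rel2, mul_assoc]
  rw [hmove, mul_assoc] at h01
  have h2 : (2 : F) • (z * (e 0 * e 1)) = 0 := by
    rw [two_smul]
    exact h01.symm
  have hne : z * (e 0 * e 1) ≠ 0 := by
    have h := hindep.ne_zero (Sum.inr ⟨[0, 1], List.isChain_pair.mpr (by norm_num), by simp⟩)
    rw [hv] at h
    simpa using h
  rcases smul_eq_zero.mp h2 with h | h
  · exact hF h
  · exact hne h
end

section
/- Let A be a unital associative ring with orthogonal full idempotents e₁, e₂, e₃ summing to 1. Then every element a ∈ A can be written as a = Σᵢ aᵢ,₁ ⋯ aᵢ,ₙᵢ where each aᵢ,ⱼ ∈ [A,A], each nᵢ is even, and Σᵢ aᵢ,ₙᵢ ⋯ aᵢ,₁ = 0. -/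
section StmtAux

variable {A : Type*} [Ring A]

private def Cm (A : Type*) [Ring A] : AddSubgroup A :=
  AddSubgroup.closure {z : A | ∃ u v : A, z = u * v - v * u}

private def Good {A : Type*} [Ring A] (a r : A) : Prop :=
  ∃ (m : ℕ) (ls : Fin m → List A),
    (∀ i, ∀ x ∈ ls i, x ∈ Cm A) ∧
    (∀ i, (ls i).length ≠ 0 ∧ Even (ls i).length) ∧
    (∑ i, (ls i).prod) = a ∧ (∑ i, (ls i).reverse.prod) = r

private lemma good_zero : Good (0 : A) 0 :=
  ⟨0, fun _ => [], fun i => i.elim0, fun i => i.elim0, by simp, by simp⟩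

private lemma good_add {a b r s : A} (h1 : Good a r) (h2 : Good b s) :
    Good (a + b) (r + s) := by
  obtain ⟨m, ls, hC, hL, hP, hR⟩ := h1
  obtain ⟨m', ls', hC', hL', hP', hR'⟩ := h2
  refine ⟨m + m', Fin.append ls ls', ?_, ?_, ?_, ?_⟩
  · intro i
    refine Fin.addCases (fun i => ?_) (fun i => ?_) i
    · rw [Fin.append_left]; exact hC i
    · rw [Fin.append_right]; exact hC' i
  · intro i
    refine Fin.addCases (fun i => ?_) (fun i => ?_) i
    · rw [Fin.append_left]; exact hL i
    · rw [Fin.append_right]; exact hL' i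
  · rw [Fin.sum_univ_add]
    simp only [Fin.append_left, Fin.append_right]
    rw [hP, hP']
  · rw [Fin.sum_univ_add]
    simp only [Fin.append_left, Fin.append_right]
    rw [hR, hR']

private lemma good_sum {ι : Type*} (s : Finset ι) (f g : ι → A) :
    (∀ k ∈ s, Good (f k) (g k)) → Good (∑ k ∈ s, f k) (∑ k ∈ s, g k) := by
  classical
  induction s using Finset.induction_on with
  | empty => intro _; simpa using (good_zero : Good (0:A) 0)
  | @insert c s hc ih =>
    intro h
    rw [Finset.sum_insert hc, Finset.sum_insert hc]
    exact good_add (h _ (Finset.mem_insert_self _ _))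
      (ih fun k hk => h k (Finset.mem_insert_of_mem hk))

private lemma good_pair {x y : A} (hx : x ∈ Cm A) (hy : y ∈ Cm A) :
    Good (x * y) (y * x) := by
  refine ⟨1, fun _ => [x, y], ?_, ?_, ?_, ?_⟩
  · intro _ z hz
    simp only [List.mem_cons, List.not_mem_nil, or_false] at hz
    rcases hz with rfl | rfl <;> assumption
  · intro _; exact ⟨by simp, ⟨1, rfl⟩⟩
  · simp
  · simp

private lemma good_quad {x y z w : A} (hx : x ∈ Cm A) (hy : y ∈ Cm A)
    (hz : z ∈ Cm A) (hw : w ∈ Cm A) :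
    Good (x * (y * (z * w))) (w * (z * (y * x))) := by
  refine ⟨1, fun _ => [x, y, z, w], ?_, ?_, ?_, ?_⟩
  · intro _ u hu
    simp only [List.mem_cons, List.not_mem_nil, or_false] at hu
    rcases hu with rfl | rfl | rfl | rfl <;> assumption
  · intro _; exact ⟨by simp, ⟨2, rfl⟩⟩
  · simp [mul_assoc]
  · simp [mul_assoc]

private lemma comm_mem (e : Fin 3 → A) (hidem : ∀ i, e i * e i = e i)
    (horth : ∀ i j, i ≠ j → e i * e j = 0) {i j : Fin 3} (hij : i ≠ j) (x : A) :
    e i * x * e j ∈ Cm A := by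
  have h1 : e i * (e i * x * e j) = e i * x * e j := by
    rw [← mul_assoc, ← mul_assoc, hidem]
  have h2 : (e i * x * e j) * e i = 0 := by
    rw [mul_assoc, horth j i (Ne.symm hij), mul_zero]
  refine AddSubgroup.subset_closure ⟨e i, e i * x * e j, ?_⟩
  rw [h1, h2, sub_zero]

private lemma decomp (e : Fin 3 → A)
    (hfull : ∀ i, AddSubgroup.closure {x : A | ∃ a b : A, x = a * e i * b} = ⊤)
    (i : Fin 3) (w : A) :
    ∃ (n : ℕ) (u v : Fin n → A), w = ∑ k, u k * e i * v k := by
  have hw : w ∈ AddSubgroup.closure {x : A | ∃ a b : A, x = a * e i * b} := by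
    rw [hfull i]; trivial
  induction hw using AddSubgroup.closure_induction with
  | mem x hx =>
    obtain ⟨c, d, rfl⟩ := hx
    exact ⟨1, fun _ => c, fun _ => d, by simp⟩
  | zero => exact ⟨0, fun k => 0, fun k => 0, by simp⟩
  | add x y hx hy ihx ihy =>
    obtain ⟨n, u, v, rfl⟩ := ihx
    obtain ⟨n', u', v', rfl⟩ := ihy
    refine ⟨n + n', Fin.append u u', Fin.append v v', ?_⟩
    rw [Fin.sum_univ_add]
    simp only [Fin.append_left, Fin.append_right]
  | neg x hx ihx =>
    obtain ⟨n, u, v, rfl⟩ := ihx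
    exact ⟨n, fun k => -u k, v, by simp [neg_mul]⟩

private lemma split (e : Fin 3 → A) (hidem : ∀ i, e i * e i = e i)
    (hfull : ∀ i, AddSubgroup.closure {x : A | ∃ a b : A, x = a * e i * b} = ⊤)
    (i j l : Fin 3) (w : A) :
    ∃ (n : ℕ) (x y : Fin n → A),
      (∀ k, ∃ c, x k = e i * c * e l) ∧ (∀ k, ∃ c, y k = e l * c * e j) ∧
      e i * w * e j = ∑ k, x k * y k := by
  obtain ⟨n, u, v, h1⟩ := decomp e hfull l 1
  refine ⟨n, fun k => e i * (w * u k) * e l, fun k => e l * v k * e j,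
    fun k => ⟨_, rfl⟩, fun k => ⟨_, rfl⟩, ?_⟩
  have hid : ∀ z : A, e l * (e l * z) = e l * z := fun z => by
    rw [← mul_assoc, hidem]
  have key : ∀ k : Fin n, (e i * (w * u k) * e l) * (e l * v k * e j)
      = e i * (w * (u k * (e l * (v k * e j)))) := by
    intro k
    simp only [mul_assoc, hid]
  have h2 : (∑ k : Fin n, u k * (e l * (v k * e j))) = e j := by
    have h3 : ∀ k : Fin n, u k * (e l * (v k * e j)) = (u k * e l * v k) * e j :=
      fun k => by simp only [mul_assoc]
    rw [Finset.sum_congr rfl fun k _ => h3 k, ← Finset.sum_mul, ← h1, one_mul]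
  calc e i * w * e j = e i * (w * e j) := by rw [mul_assoc]
    _ = ∑ k : Fin n, (e i * (w * u k) * e l) * (e l * v k * e j) := by
        rw [Finset.sum_congr rfl fun k _ => key k, ← Finset.mul_sum, ← Finset.mul_sum, h2]

private lemma exists_third : ∀ i j : Fin 3, ∃ l : Fin 3, l ≠ i ∧ l ≠ j := by decide

private lemma offdiag (e : Fin 3 → A) (hidem : ∀ i, e i * e i = e i)
    (horth : ∀ i j, i ≠ j → e i * e j = 0)
    (hfull : ∀ i, AddSubgroup.closure {x : A | ∃ a b : A, x = a * e i * b} = ⊤)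
    {i j : Fin 3} (hij : i ≠ j) (x : A) :
    Good (e i * x * e j) 0 := by
  obtain ⟨l, hli, hlj⟩ := exists_third i j
  obtain ⟨n, xs, ys, hxs, hys, heq⟩ := split e hidem hfull i j l x
  rw [heq, show (0:A) = ∑ _k : Fin n, (0:A) by simp]
  apply good_sum
  intro k _
  obtain ⟨c, hc⟩ := hxs k
  obtain ⟨d, hd⟩ := hys k
  have hxk : xs k ∈ Cm A := hc ▸ comm_mem e hidem horth (Ne.symm hli) c
  have hyk : ys k ∈ Cm A := hd ▸ comm_mem e hidem horth hlj d
  have hp := good_pair hxk hyk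
  have hzero : ys k * xs k = 0 := by
    rw [hc, hd]
    have horj : ∀ z : A, e j * (e i * z) = 0 := fun z => by
      rw [← mul_assoc, horth j i (Ne.symm hij), zero_mul]
    simp only [mul_assoc, horj, mul_zero]
  rwa [hzero] at hp

private lemma zero_diag (e : Fin 3 → A) (hidem : ∀ i, e i * e i = e i)
    (horth : ∀ i j, i ≠ j → e i * e j = 0)
    (hfull : ∀ i, AddSubgroup.closure {x : A | ∃ a b : A, x = a * e i * b} = ⊤)
    (j : Fin 3) (t : A) :
    Good (0 : A) (e j * t * e j) := by
  obtain ⟨k, l, hjk, hkl, hjl⟩ : ∃ k l : Fin 3, j ≠ k ∧ k ≠ l ∧ j ≠ l := by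
    have h : ∀ j : Fin 3, ∃ k l : Fin 3, j ≠ k ∧ k ≠ l ∧ j ≠ l := by decide
    exact h j
  obtain ⟨n₁, d, y, hd, hy, h1⟩ := split e hidem hfull j j k t
  rw [h1, show (0:A) = ∑ _m : Fin n₁, (0:A) by simp]
  apply good_sum
  intro m _
  obtain ⟨c₁, hc₁⟩ := hd m
  obtain ⟨c₂, hc₂⟩ := hy m
  obtain ⟨n₂, x', y', hx', hy', h2⟩ := split e hidem hfull k j l c₂
  rw [show y m = ∑ nn, x' nn * y' nn from hc₂.trans h2, Finset.mul_sum,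
    show (0:A) = ∑ _nn : Fin n₂, (0:A) by simp]
  apply good_sum
  intro nn _
  obtain ⟨c₃, hc₃⟩ := hx' nn
  obtain ⟨c₄, hc₄⟩ := hy' nn
  obtain ⟨n₃, b, a, hb, ha, h3⟩ := split e hidem hfull l j k c₄
  rw [show y' nn = ∑ p, b p * a p from hc₄.trans h3, Finset.mul_sum, Finset.mul_sum,
    show (0:A) = ∑ _p : Fin n₃, (0:A) by simp]
  apply good_sum
  intro p _
  obtain ⟨c₅, hc₅⟩ := hb p
  obtain ⟨c₆, hc₆⟩ := ha p
  have ma : a p ∈ Cm A := hc₆ ▸ comm_mem e hidem horth (Ne.symm hjk) c₆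
  have mb : b p ∈ Cm A := hc₅ ▸ comm_mem e hidem horth (Ne.symm hkl) c₅
  have mx : x' nn ∈ Cm A := hc₃ ▸ comm_mem e hidem horth hkl c₃
  have md : d m ∈ Cm A := hc₁ ▸ comm_mem e hidem horth hjk c₁
  have hq := good_quad ma mb mx md
  have hzero : a p * (b p * (x' nn * d m)) = 0 := by
    rw [hc₆, hc₅]
    have horj : ∀ z : A, e j * (e l * z) = 0 := fun z => by
      rw [← mul_assoc, horth j l hjl, zero_mul]
    simp only [mul_assoc, horj, mul_zero]
  rwa [hzero] at hq

private lemma diag (e : Fin 3 → A) (hidem : ∀ i, e i * e i = e i)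
    (horth : ∀ i j, i ≠ j → e i * e j = 0)
    (hfull : ∀ i, AddSubgroup.closure {x : A | ∃ a b : A, x = a * e i * b} = ⊤)
    (i : Fin 3) (x : A) :
    Good (e i * x * e i) 0 := by
  obtain ⟨l, hli, -⟩ := exists_third i i
  obtain ⟨n, xs, ys, hxs, hys, heq⟩ := split e hidem hfull i i l x
  have h1 : Good (e i * x * e i) (∑ k, ys k * xs k) := by
    rw [heq]
    apply good_sum
    intro k _
    obtain ⟨c, hc⟩ := hxs k
    obtain ⟨d, hd⟩ := hys k
    exact good_pair (hc ▸ comm_mem e hidem horth (Ne.symm hli) c)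
      (hd ▸ comm_mem e hidem horth hli d)
  have h2 : Good (0:A) (∑ k, -(ys k * xs k)) := by
    rw [show (0:A) = ∑ _k : Fin n, (0:A) by simp]
    apply good_sum
    intro k _
    obtain ⟨c, hc⟩ := hxs k
    obtain ⟨d, hd⟩ := hys k
    have hzd := zero_diag e hidem horth hfull l (-(d * (e i * c)))
    have hre : e l * -(d * (e i * c)) * e l = -(ys k * xs k) := by
      rw [hc, hd]
      have hid : ∀ z : A, e i * (e i * z) = e i * z := fun z => by
        rw [← mul_assoc, hidem]
      simp only [mul_assoc, neg_mul, mul_neg, hid]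
    rwa [hre] at hzd
  have h3 := good_add h1 h2
  simpa using h3

end StmtAux

/-- Every element of `A` is a sum of even-length products of elements of `[A,A]`
whose sum of reversed products is zero. -/
theorem stmt_15 (A : Type*) [Ring A] (e : Fin 3 → A)
    (hidem : ∀ i, e i * e i = e i)
    (horth : ∀ i j, i ≠ j → e i * e j = 0)
    (hsum : ∑ i, e i = 1)
    (hfull : ∀ i, AddSubgroup.closure {x : A | ∃ a b : A, x = a * e i * b} = ⊤)
    (a : A) :
    ∃ (m : ℕ) (ls : Fin m → List A),
      (∀ i, ∀ x ∈ ls i,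
        x ∈ AddSubgroup.closure {z : A | ∃ u v : A, z = u * v - v * u}) ∧
      (∀ i, (ls i).length ≠ 0 ∧ Even (ls i).length) ∧
      a = ∑ i, (ls i).prod ∧
      (∑ i, (ls i).reverse.prod) = 0 := by
  have key : ∀ (i j : Fin 3) (x : A), Good (e i * x * e j) 0 := by
    intro i j x
    by_cases hij : i = j
    · subst hij; exact diag e hidem horth hfull i x
    · exact offdiag e hidem horth hfull hij x
  have hdec : ∑ i : Fin 3, ∑ j : Fin 3, e i * a * e j = a := by
    have h1 : ∀ i : Fin 3, ∑ j : Fin 3, e i * a * e j = e i * a := fun i => by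
      rw [← Finset.mul_sum, hsum, mul_one]
    rw [Finset.sum_congr rfl fun i _ => h1 i, ← Finset.sum_mul, hsum, one_mul]
  have hg : Good a (0:A) := by
    rw [← hdec, show (0:A) = ∑ _i : Fin 3, ∑ _j : Fin 3, (0:A) by simp]
    apply good_sum
    intro i _
    apply good_sum
    intro j _
    exact key i j a
  obtain ⟨m, ls, hC, hL, hP, hR⟩ := hg
  exact ⟨m, ls, hC, hL, hP.symm, hR⟩
end

section
/- Let A be a unital associative ring with orthogonal full idempotents e₁, e₂, e₃ summing to 1, and suppose Ann(A) = 0. If x ∈ A satisfies x·c = 0 for every c ∈ [A,A], then x = 0. -/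
/-- If `Ann(A) = 0` and `x·c = 0` for every `c ∈ [A,A]`, then `x = 0`. -/
theorem stmt_16 (A : Type*) [Ring A] (e : Fin 3 → A)
    (hidem : ∀ i, e i * e i = e i)
    (horth : ∀ i j, i ≠ j → e i * e j = 0)
    (hsum : ∑ i, e i = 1)
    (hfull : ∀ i, AddSubgroup.closure {x : A | ∃ a b : A, x = a * e i * b} = ⊤)
    (hann : ∀ a : A, (∀ b : A, a * b = 0 ∧ b * a = 0) → a = 0)
    (x : A)
    (hx : ∀ c ∈ AddSubgroup.closure {z : A | ∃ u v : A, z = u * v - v * u}, x * c = 0) :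
    x = 0 := by
  -- Step 1: off-diagonal Peirce components are commutators, hence killed by x.
  have key : ∀ i j : Fin 3, i ≠ j → ∀ a : A, x * (e i * a * e j) = 0 := by
    intro i j hij a
    apply hx
    apply AddSubgroup.subset_closure
    refine ⟨e i * a, e j, ?_⟩
    have h0 : e j * (e i * a) = 0 := by
      rw [← mul_assoc, horth j i (Ne.symm hij), zero_mul]
    rw [h0, sub_zero, mul_assoc]
  -- Step 2: x kills each e i.
  have diag : ∀ i : Fin 3, x * e i = 0 := by
    intro i
    obtain ⟨j, hj⟩ : ∃ j : Fin 3, j ≠ i := by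
      fin_cases i
      · exact ⟨1, by decide⟩
      · exact ⟨0, by decide⟩
      · exact ⟨0, by decide⟩
    have h1 : (1 : A) ∈ AddSubgroup.closure {y : A | ∃ a b : A, y = a * e j * b} := by
      rw [hfull j]; trivial
    have hmain : x * (e i * 1 * e i) = 0 := by
      refine AddSubgroup.closure_induction ?_ ?_ ?_ ?_ h1
      · rintro z ⟨u, v, rfl⟩
        have h2 : x * (e i * (u * e j * v) * e i) = x * (e i * u * e j) * (v * e i) := by
          noncomm_ring
        rw [h2, key i j (Ne.symm hj) u, zero_mul]
      · simp
      · intro y z _ _ hy hz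
        have h3 : x * (e i * (y + z) * e i)
            = x * (e i * y * e i) + x * (e i * z * e i) := by noncomm_ring
        rw [h3, hy, hz, add_zero]
      · intro y _ hy
        have h4 : x * (e i * (-y) * e i) = -(x * (e i * y * e i)) := by noncomm_ring
        rw [h4, hy, neg_zero]
    have : e i * 1 * e i = e i := by rw [mul_one, hidem]
    rwa [this] at hmain
  -- Step 3: conclude.
  have hx1 : x * 1 = 0 := by
    rw [← hsum, Finset.mul_sum]
    simp [diag]
  simpa using hx1
end
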